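/- Let m ∈ ℝ^K be a probability vector (entries sum to 1) and let R_b := 1 mᵀ − I ∈ ℝ^{K×K}. Then for every real c, the matrix exponential satisfies exp(c R_b) = e^{−c} I + (1 − e^{−c}) 1 mᵀ. -/

import Mathlib

open NormedSpace Nat

lemma exp_idem {K : ℕ} (P : Matrix (Fin K) (Fin K) ℝ) (hP : P * P = P) (c : ℝ) :
    exp (c • P) = 1 + (Real.exp c - 1) • P := by
  letI : SeminormedRing (Matrix (Fin K) (Fin K) ℝ) := Matrix.linftyOpSemiNormedRing
  letI : NormedRing (Matrix (Fin K) (Fin K) ℝ) := Matrix.linftyOpNormedRing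
  letI : NormedAlgebra ℝ (Matrix (Fin K) (Fin K) ℝ) := Matrix.linftyOpNormedAlgebra
  have hPn : ∀ n : ℕ, P ^ (n + 1) = P := by
    intro n
    induction n with
    | zero => simp
    | succ n ih => rw [pow_succ, ih, hP]
  have hsum : Summable fun n : ℕ => ((n ! : ℝ)⁻¹) • (c • P) ^ n :=
    NormedSpace.expSeries_summable' _
  have hterm : ∀ n : ℕ, (((n + 1)! : ℝ)⁻¹) • (c • P) ^ (n + 1)
      = (c ^ (n + 1) / (n + 1)!) • P := by
    intro n
    rw [smul_pow, hPn, smul_smul, div_eq_inv_mul]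
  have hrsum : Summable fun n : ℕ => c ^ n / n ! := Real.summable_pow_div_factorial c
  have hreal : Real.exp c = 1 + ∑' n : ℕ, c ^ (n + 1) / (n + 1)! := by
    rw [Real.exp_eq_exp_ℝ, NormedSpace.exp_eq_tsum_div]
    beta_reduce
    rw [Summable.tsum_eq_zero_add hrsum]
    simp
  rw [NormedSpace.exp_eq_tsum (𝕂 := ℝ)]
  beta_reduce
  rw [Summable.tsum_eq_zero_add hsum]
  simp only [hterm, pow_zero, Nat.factorial_zero, Nat.cast_one, inv_one, one_smul]
  have h2 : Summable fun n : ℕ => c ^ (n + 1) / (n + 1)! :=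
    hrsum.comp_injective (add_left_injective 1)
  rw [Summable.tsum_smul_const h2]
  congr 1
  rw [hreal, add_sub_cancel_left]

/-- For a probability vector `m` and the base rate matrix `R_b = 1 mᵀ − I`, the
matrix exponential satisfies `exp(c R_b) = e^{−c} I + (1 − e^{−c}) 1 mᵀ` for
every real `c`. -/
theorem exp_base_rate_matrix
    {K : ℕ} (hK : 1 ≤ K) (m : Fin K → ℝ)
    (hm_nonneg : ∀ k, 0 ≤ m k) (hm_sum : ∑ k, m k = 1) (c : ℝ) :
    NormedSpace.exp
        (c • (Matrix.vecMulVec (1 : Fin K → ℝ) m - (1 : Matrix (Fin K) (Fin K) ℝ)))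
      = Real.exp (-c) • (1 : Matrix (Fin K) (Fin K) ℝ)
          + (1 - Real.exp (-c)) • Matrix.vecMulVec (1 : Fin K → ℝ) m := by
  set P := Matrix.vecMulVec (1 : Fin K → ℝ) m with hPdef
  have hP : P * P = P := by
    ext i j
    simp [hPdef, Matrix.mul_apply, Matrix.vecMulVec_apply, ← Finset.sum_mul, hm_sum]
  have key : c • (P - (1 : Matrix (Fin K) (Fin K) ℝ))
      = c • P + (-c) • (1 : Matrix (Fin K) (Fin K) ℝ) := by
    rw [smul_sub, sub_eq_add_neg, ← neg_smul]
  have comm : Commute (c • P) ((-c) • (1 : Matrix (Fin K) (Fin K) ℝ)) :=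
    (Commute.one_right (c • P)).smul_right (-c)
  have h1 : NormedSpace.exp ((-c) • (1 : Matrix (Fin K) (Fin K) ℝ))
      = Real.exp (-c) • (1 : Matrix (Fin K) (Fin K) ℝ) := by
    rw [exp_idem 1 (mul_one 1) (-c)]
    module
  have hadd := Matrix.exp_add_of_commute (c • P) ((-c) • (1 : Matrix (Fin K) (Fin K) ℝ)) comm
  rw [key, hadd, exp_idem P hP c, h1,
    mul_smul_comm, mul_one, smul_add, smul_smul]
  have hsc : Real.exp (-c) * (Real.exp c - 1) = 1 - Real.exp (-c) := by
    rw [mul_sub, mul_one, ← Real.exp_add]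
    simp
  rw [hsc]
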